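/- Any nilpotent group of orientation-preserving piecewise linear homeomorphisms of the circle S¹ is abelian. -/

import Mathlib

open Set

/-- `F : ℝ → ℝ` is a lift of an orientation-preserving piecewise linear
homeomorphism of the circle `S¹ = ℝ/ℤ`: it is strictly increasing, commutes
with the unit translation, and there is a partition
`t₀ < t₁ < ⋯ < t_k = t₀ + 1` of a fundamental domain such that `F` is affine
on each subinterval `[t_i, t_{i+1}]` (so the induced circle map is affine on
each of finitely many arcs). -/
def IsPLCircleLift (F : ℝ → ℝ) : Prop :=
  StrictMono F ∧ (∀ x : ℝ, F (x + 1) = F x + 1) ∧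
    ∃ (k : ℕ) (t : ℕ → ℝ), 0 < k ∧ t k = t 0 + 1 ∧
      (∀ i < k, t i < t (i + 1)) ∧
      ∀ i < k, ∃ m c : ℝ, ∀ x ∈ Icc (t i) (t (i + 1)), F x = m * x + c

namespace PLAux

/-- `F` agrees with an affine map of slope `m` on a right neighborhood of `p`. -/
def RAff (F : ℝ → ℝ) (p m : ℝ) : Prop :=
  ∃ c δ : ℝ, 0 < δ ∧ ∀ x ∈ Icc p (p + δ), F x = m * x + c

theorem RAff.unique {F : ℝ → ℝ} {p m m' : ℝ} (h : RAff F p m) (h' : RAff F p m') :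
    m = m' := by
  obtain ⟨c, δ, hδ, hx⟩ := h
  obtain ⟨c', δ', hδ', hx'⟩ := h'
  set ε := min δ δ' with hε
  have hε0 : 0 < ε := lt_min hδ hδ'
  have h1 : F p = m * p + c := hx p ⟨le_refl _, by linarith⟩
  have h1' : F p = m' * p + c' := hx' p ⟨le_refl _, by linarith⟩
  have h2 : F (p + ε) = m * (p + ε) + c :=
    hx _ ⟨by linarith, by linarith [min_le_left δ δ']⟩
  have h2' : F (p + ε) = m' * (p + ε) + c' :=
    hx' _ ⟨by linarith, by linarith [min_le_right δ δ']⟩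
  have : m * ε = m' * ε := by nlinarith
  exact mul_right_cancel₀ (ne_of_gt hε0) this

open Classical in
/-- The right slope of `F` at `p` (equal to `m` whenever `RAff F p m`). -/
noncomputable def rslope (F : ℝ → ℝ) (p : ℝ) : ℝ :=
  if h : ∃ m, RAff F p m then h.choose else 1

theorem RAff.rslope_eq {F : ℝ → ℝ} {p m : ℝ} (h : RAff F p m) : rslope F p = m := by
  have he : ∃ m, RAff F p m := ⟨m, h⟩
  classical
  rw [rslope]
  rw [dif_pos he]
  exact he.choose_spec.unique h

theorem RAff.comp {Fg Fh : ℝ → ℝ} {p m₁ m₂ : ℝ} (h₁ : RAff Fh p m₁) (hm₁ : 0 < m₁)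
    (h₂ : RAff Fg (Fh p) m₂) : RAff (fun x => Fg (Fh x)) p (m₂ * m₁) := by
  obtain ⟨c₁, δ₁, hδ₁, hx₁⟩ := h₁
  obtain ⟨c₂, δ₂, hδ₂, hx₂⟩ := h₂
  refine ⟨m₂ * c₁ + c₂, min δ₁ (δ₂ / m₁), lt_min hδ₁ (div_pos hδ₂ hm₁), fun x hx => ?_⟩
  have hx1 : x ∈ Icc p (p + δ₁) :=
    ⟨hx.1, hx.2.trans (by linarith [min_le_left δ₁ (δ₂ / m₁)])⟩
  have hFh : Fh x = m₁ * x + c₁ := hx₁ x hx1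
  have hFhp : Fh p = m₁ * p + c₁ := hx₁ p ⟨le_refl _, by linarith⟩
  have hx2 : Fh x ∈ Icc (Fh p) (Fh p + δ₂) := by
    constructor
    · rw [hFh, hFhp]; nlinarith [hx.1]
    · rw [hFh, hFhp]
      have : x - p ≤ δ₂ / m₁ := by linarith [hx.2, min_le_right δ₁ (δ₂ / m₁)]
      have : m₁ * (x - p) ≤ δ₂ := by
        rw [← le_div_iff₀' hm₁]; linarith
      nlinarith
  show Fg (Fh x) = _
  rw [hx₂ _ hx2, hFh]; ring

theorem RAff.add_const {F : ℝ → ℝ} {p m : ℝ} (a : ℝ) (h : RAff F p m) :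
    RAff (fun x => F x + a) p m := by
  obtain ⟨c, δ, hδ, hx⟩ := h
  exact ⟨c + a, δ, hδ, fun x hxx => by show F x + a = _; rw [hx x hxx]; ring⟩

theorem RAff.of_eventually_eq {F G : ℝ → ℝ} {p m : ℝ} (h : RAff F p m)
    (hFG : ∀ x, G x = F x) : RAff G p m := by
  obtain ⟨c, δ, hδ, hx⟩ := h
  exact ⟨c, δ, hδ, fun x hxx => by rw [hFG x, hx x hxx]⟩


section PLBasics

variable {F : ℝ → ℝ}

theorem pl_map_add_int (hF : IsPLCircleLift F) (x : ℝ) (n : ℤ) :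
    F (x + n) = F x + n := by
  induction n using Int.induction_on with
  | zero => simp
  | succ m ih =>
    have := hF.2.1 (x + m)
    push_cast
    push_cast at ih
    rw [show x + ((m : ℝ) + 1) = x + m + 1 by ring, hF.2.1 (x + m), ih]
    ring
  | pred m ih =>
    have h := hF.2.1 (x + (-(m : ℝ) - 1))
    push_cast at ih ⊢
    rw [show x + (-(m : ℝ) - 1) + 1 = x + -(m : ℝ) by ring] at h
    rw [ih] at h
    ring_nf at h ⊢
    linarith

theorem pl_surjective (hF : IsPLCircleLift F) : Function.Surjective F := by
  obtain ⟨hmono, hper, k, t, hk, htk, ht, haff⟩ := id hF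
  have key : ∀ i ≤ k, ∀ y ∈ Icc (F (t 0)) (F (t i)), ∃ x, F x = y := by
    intro i
    induction i with
    | zero =>
      intro _ y hy
      exact ⟨t 0, le_antisymm hy.1 hy.2⟩
    | succ i ih =>
      intro hik y hy
      have hik' : i < k := hik
      rcases le_or_gt y (F (t i)) with h | h
      · exact ih (le_of_lt hik') y ⟨hy.1, h⟩
      · obtain ⟨m, c, hmc⟩ := haff i hik'
        have h1 : F (t i) = m * t i + c := hmc _ ⟨le_refl _, le_of_lt (ht i hik')⟩
        have h2 : F (t (i+1)) = m * t (i+1) + c := hmc _ ⟨le_of_lt (ht i hik'), le_refl _⟩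
        have hm : 0 < m := by
          have := hmono (ht i hik')
          rw [h1, h2] at this
          nlinarith [ht i hik']
        refine ⟨(y - c) / m, ?_⟩
        have hx1 : t i ≤ (y - c) / m := by
          rw [le_div_iff₀ hm]; nlinarith [hy.1, h.le]
        have hx2 : (y - c) / m ≤ t (i + 1) := by
          rw [div_le_iff₀ hm]; nlinarith [hy.2]
        rw [hmc _ ⟨hx1, hx2⟩]
        field_simp
        ring
  intro y
  set n : ℤ := ⌈F (t 0) - y⌉ with hn
  have h1 : F (t 0) - y ≤ n := Int.le_ceil _
  have h2 : (n : ℝ) < F (t 0) - y + 1 := Int.ceil_lt_add_one _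
  have hFk : F (t k) = F (t 0) + 1 := by rw [htk, hper]
  have hy : y + n ∈ Icc (F (t 0)) (F (t k)) := by
    constructor
    · linarith
    · rw [hFk]; linarith
  obtain ⟨x, hx⟩ := key k (le_refl _) _ hy
  refine ⟨x - n, ?_⟩
  have h3 : F (x - n + n) = F (x - n) + n := pl_map_add_int hF _ n
  rw [sub_add_cancel] at h3
  rw [hx] at h3
  linarith

theorem pl_continuous (hF : IsPLCircleLift F) : Continuous F :=
  hF.1.monotone.continuous_of_surjective (pl_surjective hF)

theorem pl_raff (hF : IsPLCircleLift F) (p : ℝ) : ∃ m, 0 < m ∧ RAff F p m := by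
  obtain ⟨hmono, hper, k, t, hk, htk, ht, haff⟩ := id hF
  have cover : ∀ j, j ≤ k → ∀ q, t 0 ≤ q → q < t j →
      ∃ i, i < k ∧ t i ≤ q ∧ q < t (i + 1) := by
    intro j
    induction j with
    | zero => intro _ q h1 h2; exact absurd (h1.trans_lt h2) (lt_irrefl _)
    | succ j ih =>
      intro hjk q h1 h2
      rcases le_or_gt (t j) q with h | h
      · exact ⟨j, hjk, h, h2⟩
      · exact ih (Nat.le_of_succ_le hjk) q h1 h
  set n : ℤ := ⌈t 0 - p⌉ with hn
  have h1 : t 0 - p ≤ n := Int.le_ceil _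
  have h2 : (n : ℝ) < t 0 - p + 1 := Int.ceil_lt_add_one _
  have hq1 : t 0 ≤ p + n := by linarith
  have hq2 : p + n < t k := by rw [htk]; linarith
  obtain ⟨i, hik, hi1, hi2⟩ := cover k le_rfl (p + n) hq1 hq2
  obtain ⟨m, c, hmc⟩ := haff i hik
  have h1' : F (t i) = m * t i + c := hmc _ ⟨le_refl _, (ht i hik).le⟩
  have h2' : F (t (i + 1)) = m * t (i + 1) + c := hmc _ ⟨(ht i hik).le, le_refl _⟩
  have hm : 0 < m := by
    have := hmono (ht i hik)
    nlinarith [ht i hik]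
  refine ⟨m, hm, c + m * n - n, t (i + 1) - (p + n), by linarith, fun x hx => ?_⟩
  have hmem : x + n ∈ Icc (t i) (t (i + 1)) :=
    ⟨by linarith [hx.1], by linarith [hx.2]⟩
  have h5 := hmc _ hmem
  have h4 : F (x + n) = F x + n := pl_map_add_int hF x n
  rw [h4] at h5
  linear_combination h5

theorem raff_shift (hF : IsPLCircleLift F) {p m : ℝ} (h : RAff F p m) (n : ℤ) :
    RAff F (p + n) m := by
  obtain ⟨c, δ, hδ, hx⟩ := h
  refine ⟨c + n - m * n, δ, hδ, fun x hxx => ?_⟩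
  have h1 : x - n ∈ Icc p (p + δ) := ⟨by linarith [hxx.1], by linarith [hxx.2]⟩
  have h2 := hx _ h1
  have h3 : F (x - n + n) = F (x - n) + n := pl_map_add_int hF _ n
  rw [sub_add_cancel] at h3
  rw [h2] at h3
  linear_combination h3

theorem pl_sub_int (hF : IsPLCircleLift F) (n : ℤ) :
    IsPLCircleLift (fun x => F x - n) := by
  obtain ⟨hmono, hper, k, t, hk, htk, ht, haff⟩ := id hF
  refine ⟨fun a b h => by simpa using hmono h,
    fun x => by simp only [hper x]; ring, k, t, hk, htk, ht, fun i hik => ?_⟩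
  obtain ⟨m, c, hmc⟩ := haff i hik
  exact ⟨m, c - n, fun x hx => by simp only [hmc x hx]; ring⟩

theorem int_valued_const {d : ℝ → ℝ} (hd : Continuous d)
    (h : ∀ t, ∃ n : ℤ, d t = n) (a b : ℝ) : d a = d b := by
  by_contra hne
  have main : ∀ u v : ℝ, d u < d v → False := by
    intro u v huv
    obtain ⟨nu, hnu⟩ := h u
    obtain ⟨nv, hnv⟩ := h v
    have hlt : nu < nv := by
      rw [hnu, hnv] at huv; exact_mod_cast huv
    have hnv1 : (nu : ℝ) + 1 ≤ (nv : ℝ) := by exact_mod_cast hlt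
    have hmem : (nu : ℝ) + 1/2 ∈ Icc (d u) (d v) := by
      constructor
      · rw [hnu]; linarith
      · rw [hnv]; linarith
    obtain ⟨cpt, hcpt⟩ := intermediate_value_univ u v hd hmem
    obtain ⟨nc, hnc⟩ := h cpt
    rw [hnc] at hcpt
    have hcast : (2 * nc : ℝ) = 2 * nu + 1 := by push_cast; linarith
    have : (2 * nc : ℤ) = 2 * nu + 1 := by exact_mod_cast hcast
    omega
  rcases lt_or_gt_of_ne hne with h' | h'
  exacts [main a b h', main b a h']

end PLBasics

section Lift

open CircleDeg1Lift

noncomputable def toUnit {F : ℝ → ℝ} (hF : IsPLCircleLift F) : CircleDeg1Liftˣ :=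
  (isUnit_iff_bijective.2
    (show Function.Bijective (⇑(⟨⟨F, hF.1.monotone⟩, hF.2.1⟩ : CircleDeg1Lift)) from
      ⟨hF.1.injective, pl_surjective hF⟩)).unit

theorem toUnit_coe {F : ℝ → ℝ} (hF : IsPLCircleLift F) :
    ⇑((toUnit hF : CircleDeg1Liftˣ) : CircleDeg1Lift) = F := by
  rw [toUnit, IsUnit.unit_spec]
  rfl

/-- `f` is a lift of the circle map `φ`. -/
def Lifts (f : CircleDeg1Lift) (φ : AddCircle (1 : ℝ) → AddCircle (1 : ℝ)) : Prop :=
  ∀ t : ℝ, φ (t : AddCircle (1 : ℝ)) = ((f t : ℝ) : AddCircle (1 : ℝ))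

theorem Lifts.mul {f g : CircleDeg1Lift} {φ ψ} (hf : Lifts f φ) (hg : Lifts g ψ) :
    Lifts (f * g) (φ ∘ ψ) := fun t => by
  calc (φ ∘ ψ) (t : AddCircle (1 : ℝ)) = φ (ψ t) := rfl
    _ = φ ((g t : ℝ) : AddCircle (1 : ℝ)) := by rw [hg t]
    _ = ((f (g t) : ℝ) : AddCircle (1 : ℝ)) := hf (g t)
    _ = (((f * g) t : ℝ) : AddCircle (1 : ℝ)) := rfl

theorem Lifts.inv (u : CircleDeg1Liftˣ) {φ ψ} (h : Lifts ↑u φ) (hinv : ∀ a, ψ (φ a) = a) :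
    Lifts ↑u⁻¹ ψ := fun t => by
  have ht : (u : CircleDeg1Lift) (((u⁻¹ : CircleDeg1Liftˣ) : CircleDeg1Lift) t) = t :=
    units_apply_inv_apply u t
  calc ψ (t : AddCircle (1 : ℝ))
      = ψ ((((u : CircleDeg1Lift) (((u⁻¹ : CircleDeg1Liftˣ) : CircleDeg1Lift) t)) : ℝ) :
        AddCircle (1 : ℝ)) := by rw [ht]
    _ = ψ (φ ((((u⁻¹ : CircleDeg1Liftˣ) : CircleDeg1Lift) t : ℝ) : AddCircle (1 : ℝ))) := by
        rw [h _]
    _ = _ := hinv _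

theorem coe_sub_int_eq (a : ℝ) (n : ℤ) :
    ((a - n : ℝ) : AddCircle (1 : ℝ)) = (a : AddCircle (1 : ℝ)) := by
  have h0 : ((n : ℝ) : AddCircle (1 : ℝ)) = 0 := by
    rw [AddCircle.coe_eq_zero_iff]
    exact ⟨n, by simp⟩
  calc ((a - n : ℝ) : AddCircle (1 : ℝ))
      = (a : AddCircle (1 : ℝ)) - ((n : ℝ) : AddCircle (1 : ℝ)) := by
        rw [QuotientAddGroup.mk_sub]
    _ = (a : AddCircle (1 : ℝ)) := by rw [h0, sub_zero]

theorem eq_add_int_of_coe_eq {a b : ℝ} (h : (a : AddCircle (1 : ℝ)) = (b : AddCircle (1 : ℝ))) :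
    ∃ n : ℤ, a = b + n := by
  have h0 : ((a - b : ℝ) : AddCircle (1 : ℝ)) = 0 := by
    rw [QuotientAddGroup.mk_sub, h, sub_self]
  obtain ⟨n, hn⟩ := (AddCircle.coe_eq_zero_iff _).1 h0
  exact ⟨n, by simp at hn; linarith⟩

theorem lifts_eq_add_int {f g : CircleDeg1Lift} {φ} (hf : Lifts f φ) (hg : Lifts g φ)
    (hfc : Continuous f) (hgc : Continuous g) : ∃ m : ℤ, ∀ t, f t = g t + m := by
  have hint : ∀ t, ∃ n : ℤ, f t - g t = n := by
    intro t
    obtain ⟨n, hn⟩ := eq_add_int_of_coe_eq ((hf t).symm.trans (hg t))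
    exact ⟨n, by linarith⟩
  have hconst := int_valued_const (hfc.sub hgc) hint
  obtain ⟨m, hm⟩ := hint 0
  refine ⟨m, fun t => ?_⟩
  have := hconst t 0
  simp only [Pi.sub_apply] at this
  linarith [this, hm]

theorem commute_of_commutator_lifts_id (a b : CircleDeg1Liftˣ)
    (hc : Continuous ⇑((a * b * a⁻¹ * b⁻¹ : CircleDeg1Liftˣ) : CircleDeg1Lift))
    (hid : Lifts ↑(a * b * a⁻¹ * b⁻¹) id) : a * b = b * a := by
  set W : CircleDeg1Liftˣ := a * b * a⁻¹ * b⁻¹ with hWdef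
  have h1 : Lifts (1 : CircleDeg1Lift) id := fun t => rfl
  obtain ⟨m, hm⟩ := lifts_eq_add_int hid h1 hc continuous_id
  have hm' : ∀ t : ℝ, ((W : CircleDeg1Lift)) t = t + m := fun t => hm t
  have hWτ : translationNumber ↑W = m :=
    (W : CircleDeg1Lift).translationNumber_of_eq_add_int (hm' 0)
  have hcomm : Commute ((W : CircleDeg1Liftˣ) : CircleDeg1Lift) ↑b := by
    ext x
    show ((W : CircleDeg1Lift)) (((b : CircleDeg1Liftˣ) : CircleDeg1Lift) x)
        = ((b : CircleDeg1Liftˣ) : CircleDeg1Lift) (((W : CircleDeg1Lift)) x)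
    rw [hm', hm' x, CircleDeg1Lift.map_add_int]
  have h3 : (a * b * a⁻¹ : CircleDeg1Liftˣ) = W * b := by rw [hWdef]; group
  have h4 : translationNumber ↑(a * b * a⁻¹ : CircleDeg1Liftˣ) = translationNumber ↑b := by
    have := translationNumber_conj_eq a ↑b
    simpa [Units.val_mul] using this
  have h5 : translationNumber ↑(W * b) = m + translationNumber ↑b := by
    rw [Units.val_mul, translationNumber_mul_of_commute hcomm, hWτ]
  rw [h3, h5] at h4
  have hm0 : (m : ℝ) = 0 := by linarith
  have hmz : m = 0 := by exact_mod_cast hm0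
  have hW1 : W = 1 := by
    apply Units.ext
    apply CircleDeg1Lift.ext
    intro x
    rw [hm' x, hmz]
    simp
  have : a * b * a⁻¹ * b⁻¹ = 1 := hW1
  calc a * b = (a * b * a⁻¹ * b⁻¹) * (b * a) := by group
    _ = b * a := by rw [this, one_mul]

theorem tau_commutator_eq_zero (a b : CircleDeg1Liftˣ)
    (hcomm : Commute (a * b * a⁻¹ * b⁻¹) b) :
    translationNumber ↑(a * b * a⁻¹ * b⁻¹ : CircleDeg1Liftˣ) = 0 := by
  set Z : CircleDeg1Liftˣ := a * b * a⁻¹ * b⁻¹ with hZdef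
  have h1 : a * b * a⁻¹ = Z * b := by rw [hZdef]; group
  have h2 : Commute (Z * b) b⁻¹ := ((hcomm.mul_left (Commute.refl b)).inv_right)
  have h2' : Commute ((Z * b : CircleDeg1Liftˣ) : CircleDeg1Lift)
      ((b⁻¹ : CircleDeg1Liftˣ) : CircleDeg1Lift) := h2.map (Units.coeHom CircleDeg1Lift)
  have h4 : translationNumber ↑(a * b * a⁻¹ : CircleDeg1Liftˣ) = translationNumber ↑b := by
    have := translationNumber_conj_eq a ↑b
    simpa [Units.val_mul] using this
  calc translationNumber ↑Z = translationNumber ↑((Z * b) * b⁻¹) := by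
        congr 1
        group
    _ = translationNumber (((Z * b : CircleDeg1Liftˣ) : CircleDeg1Lift)
          * ((b⁻¹ : CircleDeg1Liftˣ) : CircleDeg1Lift)) := by rw [Units.val_mul]
    _ = translationNumber ↑(Z * b) + translationNumber ↑(b⁻¹ : CircleDeg1Liftˣ) :=
        translationNumber_mul_of_commute h2'
    _ = translationNumber ↑(a * b * a⁻¹ : CircleDeg1Liftˣ)
          + translationNumber ↑(b⁻¹ : CircleDeg1Liftˣ) := by rw [h1]
    _ = translationNumber (b : CircleDeg1Lift) + - translationNumber (b : CircleDeg1Lift) := by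
        rw [h4, translationNumber_units_inv]
    _ = 0 := add_neg_cancel _

theorem unit_inv_continuous (u : CircleDeg1Liftˣ) :
    Continuous ⇑((u⁻¹ : CircleDeg1Liftˣ) : CircleDeg1Lift) := by
  apply Monotone.continuous_of_surjective
    ((u⁻¹ : CircleDeg1Liftˣ) : CircleDeg1Lift).monotone
  have := (toOrderIso (u⁻¹ : CircleDeg1Liftˣ)).surjective
  rwa [coe_toOrderIso] at this

theorem exists_fixed_of_tau_zero (f : CircleDeg1Lift) (hc : Continuous f)
    (hτ : translationNumber f = 0) : ∃ x : ℝ, f x = x := by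
  have h := (f.translationNumber_eq_int_iff hc (m := 0)).1 (by simpa using hτ)
  obtain ⟨x, hx⟩ := h
  exact ⟨x, by simpa using hx⟩

end Lift

open scoped commutatorElement in
theorem exists_central_commutator {G : Type*} [Group G] [Group.IsNilpotent G]
    (h : ¬ ∀ a b : G, a * b = b * a) :
    ∃ x y : G, x * y * x⁻¹ * y⁻¹ ≠ 1 ∧
      ∀ g : G, (x * y * x⁻¹ * y⁻¹) * g = g * (x * y * x⁻¹ * y⁻¹) := by
  classical
  have hex : ∃ n, (⊤ : Subgroup G).lowerCentralSeries n = ⊥ := nilpotent_iff_lowerCentralSeries.mp inferInstance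
  set N := Nat.find hex with hN
  have hbot : (⊤ : Subgroup G).lowerCentralSeries N = ⊥ := Nat.find_spec hex
  match hNN : N, hbot with
  | 0, hbot =>
    exfalso
    apply h
    intro a b
    have : a ∈ (⊥ : Subgroup G) := by
      rw [← hbot]; exact Subgroup.mem_top a
    have ha : a = 1 := Subgroup.mem_bot.1 this
    rw [ha]; simp
  | 1, hbot =>
    exfalso
    apply h
    intro a b
    have hmem : a * b * a⁻¹ * b⁻¹ ∈ (⊤ : Subgroup G).lowerCentralSeries 1 := by
      rw [Subgroup.top_lowerCentralSeries_one]
      have : ⁅a, b⁆ ∈ commutator G :=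
        Subgroup.commutator_mem_commutator (Subgroup.mem_top a) (Subgroup.mem_top b)
      simpa [commutatorElement_def] using this
    rw [hbot] at hmem
    have h1 : a * b * a⁻¹ * b⁻¹ = 1 := Subgroup.mem_bot.1 hmem
    have : a * b = (a * b * a⁻¹ * b⁻¹) * (b * a) := by group
    rw [h1, one_mul] at this
    exact this
  | (m + 2), hbot =>
    have hne : (⊤ : Subgroup G).lowerCentralSeries (m + 1) ≠ ⊥ := by
      intro hcon
      have := Nat.find_min hex (m := m + 1) (by omega)
      exact this hcon
    have hset : ¬ ({x : G | ∃ p ∈ (⊤ : Subgroup G).lowerCentralSeries m, ∃ q ∈ (⊤ : Subgroup G),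
        p * q * p⁻¹ * q⁻¹ = x} ⊆ {1}) := by
      intro hsub
      apply hne
      rw [Subgroup.lowerCentralSeries_succ, Subgroup.commutator_def, Subgroup.closure_eq_bot_iff]
      exact hsub
    obtain ⟨c, hcS, hc1⟩ := Set.not_subset.1 hset
    obtain ⟨x, hx, y, -, hxy⟩ := hcS
    refine ⟨x, y, by rwa [hxy], fun g => ?_⟩
    have hcmem : c ∈ (⊤ : Subgroup G).lowerCentralSeries (m + 1) := by
      rw [Subgroup.mem_lowerCentralSeries_succ_iff]
      exact Subgroup.subset_closure ⟨x, hx, y, Subgroup.mem_top y, hxy⟩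
    have hcomm : c * g * c⁻¹ * g⁻¹ ∈ (⊤ : Subgroup G).lowerCentralSeries (m + 2) := by
      rw [Subgroup.mem_lowerCentralSeries_succ_iff]
      exact Subgroup.subset_closure ⟨c, hcmem, g, Subgroup.mem_top g, rfl⟩
    rw [hbot] at hcomm
    have h1 : c * g * c⁻¹ * g⁻¹ = 1 := Subgroup.mem_bot.1 hcomm
    have h2 : c * g = (c * g * c⁻¹ * g⁻¹) * (g * c) := by group
    rw [h1, one_mul] at h2
    rw [hxy]
    exact h2

theorem exists_piece {k : ℕ} {t : ℕ → ℝ} :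
    ∀ j, j ≤ k → ∀ q : ℝ, t 0 ≤ q → q < t j → ∃ i, i < k ∧ t i ≤ q ∧ q < t (i + 1) := by
  intro j
  induction j with
  | zero => intro _ q h1 h2; exact absurd (h1.trans_lt h2) (lt_irrefl _)
  | succ j ih =>
    intro hjk q h1 h2
    rcases le_or_gt (t j) q with h | h
    · exact ⟨j, hjk, h, h2⟩
    · exact ih (Nat.le_of_succ_le hjk) q h1 h

theorem key {G : Type*} [Group G]
    (ρ : G → AddCircle (1 : ℝ) → AddCircle (1 : ℝ))
    (hmul : ∀ g h : G, ρ (g * h) = ρ g ∘ ρ h)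
    (hPL : ∀ g : G, ∃ F : ℝ → ℝ, IsPLCircleLift F ∧
      ∀ x : ℝ, ρ g (x : AddCircle (1 : ℝ)) = ((F x : ℝ) : AddCircle (1 : ℝ)))
    (x y z : G) (hz : z = x * y * x⁻¹ * y⁻¹) (hzc : ∀ g, z * g = g * z)
    (F : ℝ → ℝ) (hF : IsPLCircleLift F)
    (hlift : ∀ t : ℝ, ρ z (t : AddCircle (1 : ℝ)) = ((F t : ℝ) : AddCircle (1 : ℝ)))
    (x₀ : ℝ) (hfix : F x₀ = x₀) (w : ℝ) (hw : w < F w) : False := by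
  classical
  set FF : G → ℝ → ℝ := fun g => (hPL g).choose with hFFdef
  have hFF : ∀ g : G, IsPLCircleLift (FF g) ∧
      ∀ t : ℝ, ρ g (t : AddCircle (1 : ℝ)) = ((FF g t : ℝ) : AddCircle (1 : ℝ)) :=
    fun g => (hPL g).choose_spec
  have hFc : Continuous F := pl_continuous hF
  have hFFc : ∀ g, Continuous (FF g) := fun g => pl_continuous (hFF g).1
  -- two functions lifting the same circle map differ by a constant
  have hconst : ∀ (A B : ℝ → ℝ), Continuous A → Continuous B →
      (∀ t : ℝ, ((A t : ℝ) : AddCircle (1 : ℝ)) = ((B t : ℝ) : AddCircle (1 : ℝ))) →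
      ∀ t : ℝ, A t = B t + (A 0 - B 0) := by
    intro A B hA hB hAB t
    have hint : ∀ u : ℝ, ∃ n : ℤ, A u - B u = n := by
      intro u
      obtain ⟨n, hn⟩ := eq_add_int_of_coe_eq (hAB u)
      exact ⟨n, by linarith⟩
    have := int_valued_const (hA.sub hB) hint t 0
    simp only [Pi.sub_apply] at this
    linarith
  -- each FF g commutes with F
  have hcomm : ∀ g : G, ∀ t : ℝ, FF g (F t) = F (FF g t) := by
    intro g
    have hcoe : ∀ t : ℝ, ((FF g (F t) : ℝ) : AddCircle (1 : ℝ))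
        = ((F (FF g t) : ℝ) : AddCircle (1 : ℝ)) := by
      intro t
      calc ((FF g (F t) : ℝ) : AddCircle (1 : ℝ))
          = ρ g ((F t : ℝ) : AddCircle (1 : ℝ)) := ((hFF g).2 (F t)).symm
        _ = ρ g (ρ z (t : AddCircle (1 : ℝ))) := by rw [hlift t]
        _ = ρ (g * z) (t : AddCircle (1 : ℝ)) := by rw [hmul g z]; rfl
        _ = ρ (z * g) (t : AddCircle (1 : ℝ)) := by rw [hzc g]
        _ = ρ z (ρ g (t : AddCircle (1 : ℝ))) := by rw [hmul z g]; rfl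
        _ = ρ z ((FF g t : ℝ) : AddCircle (1 : ℝ)) := by rw [(hFF g).2 t]
        _ = ((F (FF g t) : ℝ) : AddCircle (1 : ℝ)) := hlift _
    have hC := hconst (fun u => FF g (F u)) (fun u => F (FF g u))
      ((hFFc g).comp hFc) (hFc.comp (hFFc g)) hcoe
    obtain ⟨n₀, hn₀⟩ := eq_add_int_of_coe_eq (hcoe 0)
    have hκ : ∀ u : ℝ, FF g (F u) = F (FF g u) + n₀ := by
      intro u
      have h1 := hC u
      linarith
    have hfixn : ∀ n : ℕ, F^[n] x₀ = x₀ := fun n => Function.iterate_fixed hfix n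
    have hiter : ∀ n : ℕ, FF g (F^[n] x₀) = F^[n] (FF g x₀) + (n : ℝ) * n₀ := by
      intro n
      induction n with
      | zero => simp
      | succ n ih =>
        rw [Function.iterate_succ_apply', Function.iterate_succ_apply', hκ, ih]
        have hcast : F (F^[n] (FF g x₀) + (n : ℝ) * (n₀ : ℝ))
            = F (F^[n] (FF g x₀)) + ((n * n₀ : ℤ) : ℝ) := by
          have h2 := pl_map_add_int hF (F^[n] (FF g x₀)) (n * n₀)
          rw [← h2]
          congr 1
          push_cast
          ring
        rw [hcast]
        push_cast
        ring
    set j : ℤ := ⌊FF g x₀ - x₀⌋ with hj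
    have hj1 : x₀ + (j : ℝ) ≤ FF g x₀ := by
      have := Int.floor_le (FF g x₀ - x₀)
      rw [← hj] at this
      linarith
    have hj2 : FF g x₀ ≤ x₀ + (j : ℝ) + 1 := by
      have := Int.lt_floor_add_one (FF g x₀ - x₀)
      rw [← hj] at this
      linarith
    have hfj : F (x₀ + (j : ℝ)) = x₀ + (j : ℝ) := by
      rw [pl_map_add_int hF x₀ j, hfix]
    have hfj1 : F (x₀ + (j : ℝ) + 1) = x₀ + (j : ℝ) + 1 := by
      have := pl_map_add_int hF x₀ (j + 1)
      push_cast at this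
      rw [show x₀ + (j : ℝ) + 1 = x₀ + ((j : ℝ) + 1) by ring, this, hfix]
      try ring
    have hinv : ∀ n : ℕ, F^[n] (FF g x₀) ∈ Icc (x₀ + (j : ℝ)) (x₀ + (j : ℝ) + 1) := by
      intro n
      induction n with
      | zero => exact ⟨hj1, hj2⟩
      | succ n ih =>
        rw [Function.iterate_succ_apply']
        constructor
        · rw [← hfj]; exact hF.1.monotone ih.1
        · rw [← hfj1]; exact hF.1.monotone ih.2
    have h2 := hiter 2
    rw [hfixn 2] at h2
    push_cast at h2
    have hmem2 := hinv 2
    have hb1 : (2 : ℝ) * n₀ ≤ 1 := by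
      have := hmem2.1
      linarith
    have hb2 : (-1 : ℝ) ≤ 2 * n₀ := by
      have := hmem2.2
      linarith
    have hz1 : (2 * n₀ : ℤ) ≤ 1 := by exact_mod_cast hb1
    have hz2 : (-1 : ℤ) ≤ 2 * n₀ := by exact_mod_cast hb2
    have hn₀0 : n₀ = 0 := by omega
    intro u
    have := hκ u
    rw [hn₀0] at this
    simpa using this
  -- the set of left endpoints of positivity components of F
  set P : Set ℝ := {p | F p = p ∧ ∃ ε > 0, ∀ u ∈ Ioo p (p + ε), u < F u} with hPdef
  have hred : ∀ v : ℝ, v + (⌈-v⌉ : ℤ) ∈ Ico (0 : ℝ) 1 := by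
    intro v
    constructor
    · linarith [Int.le_ceil (-v)]
    · linarith [Int.ceil_lt_add_one (-v)]
  have hPne : ∃ p, p ∈ P := by
    set A : Set ℝ := Iic w ∩ {v | F v = v} with hAdef
    have hAcl : IsClosed A := isClosed_Iic.inter (isClosed_eq hFc continuous_id)
    have hAne : A.Nonempty := by
      refine ⟨x₀ + (⌊w - x₀⌋ : ℤ), ?_, ?_⟩
      · have := Int.floor_le (w - x₀)
        simp only [mem_Iic]
        linarith
      · show F _ = _
        rw [pl_map_add_int hF x₀ _, hfix]
    have hAbdd : BddAbove A := ⟨w, fun v hv => hv.1⟩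
    set p := sSup A with hpdef
    have hpA : p ∈ A := hAcl.csSup_mem hAne hAbdd
    have hpw : p < w := by
      rcases lt_or_eq_of_le (show p ≤ w from hpA.1) with h | h
      · exact h
      · exfalso
        have := hpA.2
        rw [h] at this
        exact (ne_of_gt hw) this
    refine ⟨p, hpA.2, w - p, by linarith, fun u hu => ?_⟩
    have huw : u < w := by
      have := hu.2
      linarith
    have hnfix : F u ≠ u := by
      intro heq
      have huA : u ∈ A := ⟨huw.le, heq⟩
      have : u ≤ p := le_csSup hAbdd huA
      linarith [hu.1]
    by_contra hle
    push_neg at hle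
    have hlt : F u < u := lt_of_le_of_ne hle hnfix
    have hcont : ContinuousOn (fun v => F v - v) (Icc u w) :=
      (hFc.sub continuous_id).continuousOn
    have hzero : (0 : ℝ) ∈ Icc (F u - u) (F w - w) := ⟨by linarith, by linarith⟩
    obtain ⟨v, hvI, hv0⟩ := intermediate_value_Icc huw.le hcont hzero
    have hfv : F v = v := by
      have := hv0
      simp only [sub_eq_zero] at this
      exact this
    have hvA : v ∈ A := ⟨hvI.2, hfv⟩
    have : v ≤ p := le_csSup hAbdd hvA
    linarith [hu.1, hvI.1]
  have hPshift : ∀ p ∈ P, ∀ n : ℤ, p + n ∈ P := by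
    rintro p ⟨hfp, ε, hε, hpos⟩ n
    refine ⟨by rw [pl_map_add_int hF p n, hfp], ε, hε, fun u hu => ?_⟩
    have h1 : u - n ∈ Ioo p (p + ε) := ⟨by linarith [hu.1], by linarith [hu.2]⟩
    have h2 := hpos _ h1
    have h3 : F (u - n + n) = F (u - n) + n := pl_map_add_int hF _ n
    rw [sub_add_cancel] at h3
    rw [h3]
    linarith
  have hPinv : ∀ (g : G), ∀ p ∈ P, FF g p ∈ P := by
    rintro g p ⟨hfp, ε, hε, hpos⟩
    have hmono : StrictMono (FF g) := (hFF g).1.1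
    refine ⟨by rw [← hcomm g p, hfp], FF g (p + ε) - FF g p,
      by have := hmono (show p < p + ε by linarith); linarith, fun u hu => ?_⟩
    obtain ⟨v, hv⟩ := pl_surjective (hFF g).1 u
    have hv1 : p < v := by
      by_contra hle
      push_neg at hle
      have : FF g v ≤ FF g p := hmono.monotone hle
      rw [hv] at this
      linarith [hu.1]
    have hv2 : v < p + ε := by
      have h1 : u < FF g (p + ε) := by linarith [hu.2]
      rw [← hv] at h1
      exact hmono.lt_iff_lt.1 h1
    have h3 := hpos v ⟨hv1, hv2⟩
    rw [← hv, ← hcomm g v]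
    exact hmono h3
  have hPfin : (P ∩ Ico (0 : ℝ) 1).Finite := by
    obtain ⟨hmono, hper, k, t, hk, htk, ht, haff⟩ := id hF
    have hsub : ∀ i, i < k → Set.Subsingleton (P ∩ Icc (t i) (t (i + 1))) := by
      intro i hik
      have haux : ∀ p ∈ P ∩ Icc (t i) (t (i + 1)), ∀ p' ∈ P ∩ Icc (t i) (t (i + 1)),
          p < p' → False := by
        rintro p ⟨hpP, hpI⟩ p' ⟨hp'P, hp'I⟩ hpp
        obtain ⟨m, c, hmc⟩ := haff i hik
        have h1 : F p = m * p + c := hmc _ hpI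
        have h2 : F p' = m * p' + c := hmc _ hp'I
        obtain ⟨hfp, ε, hε, hpos⟩ := hpP
        have hfp' : F p' = p' := hp'P.1
        rw [hfp] at h1
        rw [hfp'] at h2
        have hm1 : m = 1 := by
          have h3 : (m - 1) * (p - p') = 0 := by nlinarith
          rcases mul_eq_zero.1 h3 with h4 | h4
          · linarith
          · exfalso; have : p = p' := by linarith
            exact absurd this (ne_of_lt hpp)
        have hc0 : c = 0 := by rw [hm1] at h1; linarith
        set u := min (p + ε / 2) ((p + p') / 2) with hu
        have hu1 : p < u := lt_min (by linarith) (by linarith)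
        have hu2 : u < p + ε := (min_le_left _ _).trans_lt (by linarith)
        have huI : u ∈ Icc (t i) (t (i + 1)) := by
          constructor
          · exact le_trans hpI.1 hu1.le
          · exact le_trans ((min_le_right _ _).trans (by linarith [hp'I.2])) (le_refl _)
        have h5 := hpos u ⟨hu1, hu2⟩
        have h6 : F u = u := by rw [hmc u huI, hm1, hc0]; ring
        linarith
      intro a ha b hb
      by_contra hne
      rcases lt_or_gt_of_ne hne with hlt | hlt
      · exact haux a ha b hb hlt
      · exact haux b hb a ha hlt
    have hcov : P ∩ Ico (t 0) (t 0 + 1) ⊆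
        ⋃ i ∈ Finset.range k, (P ∩ Icc (t i) (t (i + 1))) := by
      rintro q ⟨hqP, hq1, hq2⟩
      obtain ⟨i, hik, h1, h2⟩ := exists_piece k le_rfl q hq1 (by rw [htk]; exact hq2)
      simp only [Set.mem_iUnion, Finset.mem_range]
      exact ⟨i, hik, hqP, h1, h2.le⟩
    have hfin1 : (P ∩ Ico (t 0) (t 0 + 1)).Finite :=
      Set.Finite.subset
        (Set.Finite.biUnion (Finset.range k).finite_toSet
          (fun i hi => (hsub i (by simpa using hi)).finite)) hcov
    have himg : (fun p => p + ((⌈t 0 - p⌉ : ℤ) : ℝ)) '' (P ∩ Ico 0 1) ⊆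
        P ∩ Ico (t 0) (t 0 + 1) := by
      rintro _ ⟨p, hp, rfl⟩
      refine ⟨hPshift p hp.1 _, ?_, ?_⟩
      · show t 0 ≤ p + ((⌈t 0 - p⌉ : ℤ) : ℝ)
        linarith [Int.le_ceil (t 0 - p)]
      · show p + ((⌈t 0 - p⌉ : ℤ) : ℝ) < t 0 + 1
        linarith [Int.ceil_lt_add_one (t 0 - p)]
    have hinj : Set.InjOn (fun p => p + ((⌈t 0 - p⌉ : ℤ) : ℝ)) (P ∩ Ico 0 1) := by
      rintro p hp p' hp' he
      simp only at he
      have hd : p - p' = ((⌈t 0 - p'⌉ - ⌈t 0 - p⌉ : ℤ) : ℝ) := by push_cast; linarith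
      have hb : |p - p'| < 1 := by
        rw [abs_lt]
        constructor
        · linarith [hp.2.1, hp'.2.2]
        · linarith [hp.2.2, hp'.2.1]
      rw [hd] at hb
      have hb1 : -(1 : ℝ) < ((⌈t 0 - p'⌉ - ⌈t 0 - p⌉ : ℤ) : ℝ) := (abs_lt.1 hb).1
      have hb2 : ((⌈t 0 - p'⌉ - ⌈t 0 - p⌉ : ℤ) : ℝ) < 1 := (abs_lt.1 hb).2
      have hz1 : -(1 : ℤ) < ⌈t 0 - p'⌉ - ⌈t 0 - p⌉ := by exact_mod_cast hb1
      have hz2 : (⌈t 0 - p'⌉ - ⌈t 0 - p⌉ : ℤ) < 1 := by exact_mod_cast hb2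
      have h0 : (⌈t 0 - p'⌉ - ⌈t 0 - p⌉ : ℤ) = 0 := by omega
      have : p - p' = 0 := by rw [hd, h0]; simp
      linarith
    exact Set.Finite.of_finite_image (hfin1.subset himg) hinj
  set P₀ : Finset ℝ := hPfin.toFinset with hP₀def
  have hP₀mem : ∀ p : ℝ, p ∈ P₀ ↔ p ∈ P ∧ p ∈ Ico (0 : ℝ) 1 := by
    intro p
    rw [hP₀def, Set.Finite.mem_toFinset]
    exact Iff.rfl
  have hP₀ne : P₀.Nonempty := by
    obtain ⟨p, hp⟩ := hPne
    refine ⟨p + ((⌈-p⌉ : ℤ) : ℝ), ?_⟩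
    rw [hP₀mem]
    exact ⟨hPshift p hp _, hred p⟩
  -- slopes
  set s : G → ℝ → ℝ := fun g p => rslope (FF g) p with hsdef
  have hs_aff : ∀ (g : G) (p : ℝ), 0 < s g p ∧ RAff (FF g) p (s g p) := by
    intro g p
    obtain ⟨m, hm, hraff⟩ := pl_raff (hFF g).1 p
    rw [hsdef]
    simp only
    rw [hraff.rslope_eq]
    exact ⟨hm, hraff⟩
  have hs_shift : ∀ (g : G) (p : ℝ) (n : ℤ), s g (p + n) = s g p := by
    intro g p n
    exact (raff_shift (hFF g).1 (hs_aff g p).2 n).rslope_eq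
  have hs_chain : ∀ (g h : G) (p : ℝ), s (g * h) p = s g (FF h p) * s h p := by
    intro g h p
    have hcoe : ∀ t : ℝ, ((FF (g * h) t : ℝ) : AddCircle (1 : ℝ))
        = ((FF g (FF h t) : ℝ) : AddCircle (1 : ℝ)) := by
      intro t
      calc ((FF (g * h) t : ℝ) : AddCircle (1 : ℝ))
          = ρ (g * h) (t : AddCircle (1 : ℝ)) := ((hFF (g * h)).2 t).symm
        _ = ρ g (ρ h (t : AddCircle (1 : ℝ))) := by rw [hmul]; rfl
        _ = ρ g ((FF h t : ℝ) : AddCircle (1 : ℝ)) := by rw [(hFF h).2 t]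
        _ = ((FF g (FF h t) : ℝ) : AddCircle (1 : ℝ)) := (hFF g).2 _
    have hC := hconst (FF (g * h)) (fun u => FF g (FF h u)) (hFFc _)
      ((hFFc g).comp (hFFc h)) hcoe
    have hcomp := RAff.comp (hs_aff h p).2 (hs_aff h p).1 (hs_aff g (FF h p)).2
    have hfinal : RAff (FF (g * h)) p (s g (FF h p) * s h p) := by
      apply RAff.of_eventually_eq
        (RAff.add_const (FF (g * h) 0 - FF g (FF h 0)) hcomp)
      intro u
      have := hC u
      linarith
    exact hfinal.rslope_eq
  -- the product-of-slopes homomorphism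
  set Φ : G → ℝ := fun g => ∏ p ∈ P₀, s g p with hΦdef
  have hΦpos : ∀ g : G, 0 < Φ g := by
    intro g
    exact Finset.prod_pos fun p _ => (hs_aff g p).1
  have hΦmul : ∀ g h : G, Φ (g * h) = Φ g * Φ h := by
    intro g h
    have hmemP₀ : ∀ p ∈ P₀, (FF h p + ((⌈-(FF h p)⌉ : ℤ) : ℝ)) ∈ P₀ := by
      intro p hp
      rw [hP₀mem] at hp ⊢
      exact ⟨hPshift _ (hPinv h p hp.1) _, hred _⟩
    have hinj2 : ∀ p ∈ P₀, ∀ p' ∈ P₀,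
        FF h p + ((⌈-(FF h p)⌉ : ℤ) : ℝ) = FF h p' + ((⌈-(FF h p')⌉ : ℤ) : ℝ) → p = p' := by
      intro p hp p' hp' he
      have h0p := ((hP₀mem p).1 hp).2
      have h0p' := ((hP₀mem p').1 hp').2
      have hmono : StrictMono (FF h) := (hFF h).1.1
      have hb1 : FF h p < FF h p' + 1 := by
        have h1 : p < p' + 1 := by linarith [h0p.2, h0p'.1]
        have h2 := hmono h1
        rwa [(hFF h).1.2.1 p'] at h2
      have hb2 : FF h p' < FF h p + 1 := by
        have h1 : p' < p + 1 := by linarith [h0p'.2, h0p.1]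
        have h2 := hmono h1
        rwa [(hFF h).1.2.1 p] at h2
      have hd : FF h p - FF h p' = ((⌈-(FF h p')⌉ - ⌈-(FF h p)⌉ : ℤ) : ℝ) := by
        push_cast
        linarith
      have hz1 : -(1 : ℤ) < ⌈-(FF h p')⌉ - ⌈-(FF h p)⌉ := by
        have : -(1 : ℝ) < ((⌈-(FF h p')⌉ - ⌈-(FF h p)⌉ : ℤ) : ℝ) := by rw [← hd]; linarith
        exact_mod_cast this
      have hz2 : (⌈-(FF h p')⌉ - ⌈-(FF h p)⌉ : ℤ) < 1 := by
        have : ((⌈-(FF h p')⌉ - ⌈-(FF h p)⌉ : ℤ) : ℝ) < 1 := by rw [← hd]; linarith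
        exact_mod_cast this
      have h0 : (⌈-(FF h p')⌉ - ⌈-(FF h p)⌉ : ℤ) = 0 := by omega
      have heq : FF h p = FF h p' := by
        have := hd
        rw [h0] at this
        simp at this
        linarith
      exact hmono.injective heq
    have hsurj : ∀ q ∈ P₀, ∃ p, ∃ hp : p ∈ P₀, FF h p + ((⌈-(FF h p)⌉ : ℤ) : ℝ) = q := by
      have := Finset.surj_on_of_inj_on_of_card_le
        (s := P₀) (t := P₀) (f := fun p _ => FF h p + ((⌈-(FF h p)⌉ : ℤ) : ℝ))
        (fun p hp => hmemP₀ p hp) (fun p p' hp hp' he => hinj2 p hp p' hp' he) le_rfl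
      intro q hq
      obtain ⟨p, hp, he⟩ := this q hq
      exact ⟨p, hp, he.symm⟩
    have hre : ∏ p ∈ P₀, s g (FF h p) = ∏ p ∈ P₀, s g p := by
      refine Finset.prod_bij (fun p _ => FF h p + ((⌈-(FF h p)⌉ : ℤ) : ℝ))
        (fun p hp => hmemP₀ p hp) (fun p hp p' hp' he => hinj2 p hp p' hp' he)
        (fun q hq => hsurj q hq) ?_
      intro p hp
      exact (hs_shift g (FF h p) _).symm
    calc Φ (g * h) = ∏ p ∈ P₀, s (g * h) p := rfl
      _ = ∏ p ∈ P₀, (s g (FF h p) * s h p) :=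
          Finset.prod_congr rfl (fun p _ => hs_chain g h p)
      _ = (∏ p ∈ P₀, s g (FF h p)) * ∏ p ∈ P₀, s h p := Finset.prod_mul_distrib
      _ = (∏ p ∈ P₀, s g p) * ∏ p ∈ P₀, s h p := by rw [hre]
      _ = Φ g * Φ h := rfl
  have hΦz : 1 < Φ z := by
    have hzcoe : ∀ t : ℝ, ((FF z t : ℝ) : AddCircle (1 : ℝ))
        = ((F t : ℝ) : AddCircle (1 : ℝ)) :=
      fun t => ((hFF z).2 t).symm.trans (hlift t)
    have hC := hconst (FF z) F (hFFc z) hFc hzcoe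
    have hsz : ∀ p ∈ P₀, 1 < s z p := by
      intro p hp
      obtain ⟨hpP, hpIco⟩ := (hP₀mem p).1 hp
      obtain ⟨m, hm, hraff⟩ := pl_raff hF p
      obtain ⟨hfp, ε, hε, hpos⟩ := hpP
      obtain ⟨c, δ, hδ, hxx⟩ := hraff
      have hFp : m * p + c = p := by
        rw [← hxx p ⟨le_rfl, by linarith⟩]
        exact hfp
      set u := p + min δ ε / 2 with hu
      have humin : 0 < min δ ε := lt_min hδ hε
      have hu1 : p < u := by rw [hu]; linarith
      have huδ : u ∈ Icc p (p + δ) := by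
        constructor
        · exact hu1.le
        · rw [hu]; linarith [min_le_left δ ε]
      have huε : u ∈ Ioo p (p + ε) := by
        constructor
        · exact hu1
        · rw [hu]; linarith [min_le_right δ ε]
      have h5 := hpos u huε
      have h6 : F u = m * u + c := hxx u huδ
      have hm1 : 1 < m := by
        have h7 : m * u + c > u := by rw [← h6]; exact h5
        have h8 : m * (u - p) > u - p := by nlinarith
        nlinarith
      have hraffz : RAff (FF z) p m := by
        apply RAff.of_eventually_eq (RAff.add_const (FF z 0 - F 0) ⟨c, δ, hδ, hxx⟩)
        intro u'
        have := hC u'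
        linarith
      have : s z p = m := hraffz.rslope_eq
      rw [this]
      exact hm1
    have := Finset.prod_lt_prod_of_nonempty (f := fun _ => (1 : ℝ)) (g := fun p => s z p)
      (fun p _ => one_pos) (fun p hp => by simpa using hsz p hp) hP₀ne
    simpa using this
  -- final contradiction
  have hxyz : x * y = z * (y * x) := by rw [hz]; group
  have h1 : Φ x * Φ y = Φ z * (Φ y * Φ x) := by
    rw [← hΦmul, ← hΦmul, ← hΦmul, hxyz]
  have h2 : Φ z = 1 := by
    have hx0 := hΦpos x
    have hy0 := hΦpos y
    have h3 : Φ z * (Φ y * Φ x) = 1 * (Φ y * Φ x) := by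
      rw [one_mul, ← h1, mul_comm]
    exact mul_right_cancel₀ (ne_of_gt (mul_pos hy0 hx0)) h3
  linarith [hΦz, h2]

end PLAux

/-- Any nilpotent group of orientation-preserving piecewise linear
homeomorphisms of the circle `S¹ = ℝ/ℤ` is abelian.  The group is encoded as
an abstract nilpotent group `G` with a faithful action `ρ` on the circle such
that each `ρ g` admits a strictly increasing piecewise linear lift to `ℝ`
commuting with the unit translation. -/
theorem abelian_of_nilpotent_PL_homeos_circle
    {G : Type*} [Group G] [Group.IsNilpotent G]
    (ρ : G → AddCircle (1 : ℝ) → AddCircle (1 : ℝ))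
    (hmul : ∀ g h : G, ρ (g * h) = ρ g ∘ ρ h)
    (hone : ρ 1 = id)
    (hPL : ∀ g : G, ∃ F : ℝ → ℝ, IsPLCircleLift F ∧
      ∀ x : ℝ, ρ g (x : AddCircle (1 : ℝ)) = ((F x : ℝ) : AddCircle (1 : ℝ)))
    (hfaithful : ∀ g : G, ρ g = id → g = 1) :
    ∀ a b : G, a * b = b * a := by
  by_contra hcon
  obtain ⟨x, y, hz1, hzc⟩ := PLAux.exists_central_commutator hcon
  set z : G := x * y * x⁻¹ * y⁻¹ with hzdef
  -- inverses act as inverses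
  have hinvρ : ∀ (g : G) (a : AddCircle (1 : ℝ)), ρ g⁻¹ (ρ g a) = a := by
    intro g a
    have h1 : ρ (g⁻¹ * g) = ρ g⁻¹ ∘ ρ g := hmul _ _
    rw [show g⁻¹ * g = 1 by group, hone] at h1
    exact (congrFun h1 a).symm
  -- lifts of x and y as units
  obtain ⟨Fx, hFx, hFxl⟩ := hPL x
  obtain ⟨Fy, hFy, hFyl⟩ := hPL y
  set X : CircleDeg1Liftˣ := PLAux.toUnit hFx with hXdef
  set Y : CircleDeg1Liftˣ := PLAux.toUnit hFy with hYdef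
  have hXcoe : ⇑((X : CircleDeg1Liftˣ) : CircleDeg1Lift) = Fx := PLAux.toUnit_coe hFx
  have hYcoe : ⇑((Y : CircleDeg1Liftˣ) : CircleDeg1Lift) = Fy := PLAux.toUnit_coe hFy
  have hLX : PLAux.Lifts ↑X (ρ x) := by
    intro t
    rw [hXcoe]
    exact hFxl t
  have hLY : PLAux.Lifts ↑Y (ρ y) := by
    intro t
    rw [hYcoe]
    exact hFyl t
  have hLXi : PLAux.Lifts ↑X⁻¹ (ρ x⁻¹) := PLAux.Lifts.inv X hLX (hinvρ x)
  have hLYi : PLAux.Lifts ↑Y⁻¹ (ρ y⁻¹) := PLAux.Lifts.inv Y hLY (hinvρ y)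
  set Z : CircleDeg1Liftˣ := X * Y * X⁻¹ * Y⁻¹ with hZdef
  have hZval : (Z : CircleDeg1Lift) = ↑X * ↑Y * ↑X⁻¹ * ↑Y⁻¹ := by
    rw [hZdef]
    simp [Units.val_mul]
  have hLZ : PLAux.Lifts ↑Z (ρ z) := by
    have h1 : PLAux.Lifts (↑X * ↑Y * ↑X⁻¹ * ↑Y⁻¹)
        (((ρ x ∘ ρ y) ∘ ρ x⁻¹) ∘ ρ y⁻¹) :=
      PLAux.Lifts.mul (PLAux.Lifts.mul (PLAux.Lifts.mul hLX hLY) hLXi) hLYi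
    have h2 : ρ z = ((ρ x ∘ ρ y) ∘ ρ x⁻¹) ∘ ρ y⁻¹ := by
      rw [hzdef, hmul (x * y * x⁻¹) y⁻¹, hmul (x * y) x⁻¹, hmul x y]
    intro t
    rw [h2, hZval]
    exact h1 t
  -- continuity
  have hXc : Continuous ⇑((X : CircleDeg1Liftˣ) : CircleDeg1Lift) := by
    rw [hXcoe]; exact PLAux.pl_continuous hFx
  have hYc : Continuous ⇑((Y : CircleDeg1Liftˣ) : CircleDeg1Lift) := by
    rw [hYcoe]; exact PLAux.pl_continuous hFy
  have hZc : Continuous ⇑((Z : CircleDeg1Liftˣ) : CircleDeg1Lift) := by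
    rw [hZval, CircleDeg1Lift.coe_mul, CircleDeg1Lift.coe_mul, CircleDeg1Lift.coe_mul]
    exact ((hXc.comp hYc).comp (PLAux.unit_inv_continuous X)).comp
      (PLAux.unit_inv_continuous Y)
  -- Z commutes with Y
  have hLZi : PLAux.Lifts ↑Z⁻¹ (ρ z⁻¹) := PLAux.Lifts.inv Z hLZ (hinvρ z)
  have hZYcomm : Z * Y = Y * Z := by
    apply PLAux.commute_of_commutator_lifts_id Z Y
    · have hval : ((Z * Y * Z⁻¹ * Y⁻¹ : CircleDeg1Liftˣ) : CircleDeg1Lift)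
          = ↑Z * ↑Y * ↑Z⁻¹ * ↑Y⁻¹ := by simp [Units.val_mul]
      rw [hval, CircleDeg1Lift.coe_mul, CircleDeg1Lift.coe_mul, CircleDeg1Lift.coe_mul]
      exact ((hZc.comp hYc).comp (PLAux.unit_inv_continuous Z)).comp
        (PLAux.unit_inv_continuous Y)
    · have h1 : PLAux.Lifts (↑Z * ↑Y * ↑Z⁻¹ * ↑Y⁻¹)
          (((ρ z ∘ ρ y) ∘ ρ z⁻¹) ∘ ρ y⁻¹) :=
        PLAux.Lifts.mul (PLAux.Lifts.mul (PLAux.Lifts.mul hLZ hLY) hLZi) hLYi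
      have h2 : ((ρ z ∘ ρ y) ∘ ρ z⁻¹) ∘ ρ y⁻¹ = ρ (z * y * z⁻¹ * y⁻¹) := by
        rw [hmul (z * y * z⁻¹) y⁻¹, hmul (z * y) z⁻¹, hmul z y]
      have h3 : z * y * z⁻¹ * y⁻¹ = 1 := by
        have := hzc y
        calc z * y * z⁻¹ * y⁻¹ = (z * y) * (y * z)⁻¹ := by group
          _ = (z * y) * (z * y)⁻¹ := by rw [← this]
          _ = 1 := by group
      intro t
      have hval : ((Z * Y * Z⁻¹ * Y⁻¹ : CircleDeg1Liftˣ) : CircleDeg1Lift)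
          = ↑Z * ↑Y * ↑Z⁻¹ * ↑Y⁻¹ := by simp [Units.val_mul]
      rw [hval]
      have := h1 t
      rw [h2, h3, hone] at this
      exact this
  -- translation number of Z vanishes, so Z has a fixed point
  have hτZ : CircleDeg1Lift.translationNumber ↑Z = 0 :=
    PLAux.tau_commutator_eq_zero X Y hZYcomm
  obtain ⟨x₀, hx₀⟩ := PLAux.exists_fixed_of_tau_zero ↑Z hZc hτZ
  have hρzfix : ρ z ((x₀ : ℝ) : AddCircle (1 : ℝ)) = ((x₀ : ℝ) : AddCircle (1 : ℝ)) := by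
    rw [hLZ x₀, hx₀]
  -- normalized PL lift of ρ z fixing x₀
  obtain ⟨Fz, hFz, hFzl⟩ := hPL z
  obtain ⟨n, hn⟩ := PLAux.eq_add_int_of_coe_eq ((hFzl x₀).symm.trans hρzfix)
  set F : ℝ → ℝ := fun u => Fz u - n with hFdef
  have hFpl : IsPLCircleLift F := PLAux.pl_sub_int hFz n
  have hFlift : ∀ t : ℝ, ρ z (t : AddCircle (1 : ℝ)) = ((F t : ℝ) : AddCircle (1 : ℝ)) := by
    intro t
    rw [hFzl t]
    exact (PLAux.coe_sub_int_eq (Fz t) n).symm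
  have hFfix : F x₀ = x₀ := by
    rw [hFdef]
    simp only
    linarith [hn]
  -- F is not the identity
  have hFnotid : ∃ t : ℝ, F t ≠ t := by
    by_contra hall
    push_neg at hall
    apply hz1
    apply hfaithful z
    funext θ
    induction θ using QuotientAddGroup.induction_on with
    | H u =>
      show ρ z ((u : ℝ) : AddCircle (1 : ℝ)) = ((u : ℝ) : AddCircle (1 : ℝ))
      rw [hFlift u, hall u]
  obtain ⟨t, hFt⟩ := hFnotid
  rcases lt_or_gt_of_ne hFt with hlt | hgt
  · -- F t < t : use z⁻¹
    have hzc' : ∀ g : G, z⁻¹ * g = g * z⁻¹ := by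
      intro g
      have h := hzc g
      calc z⁻¹ * g = z⁻¹ * (g * z) * z⁻¹ := by group
        _ = z⁻¹ * (z * g) * z⁻¹ := by rw [← h]
        _ = g * z⁻¹ := by group
    have hρzifix : ρ z⁻¹ ((x₀ : ℝ) : AddCircle (1 : ℝ)) = ((x₀ : ℝ) : AddCircle (1 : ℝ)) := by
      conv_lhs => rw [← hρzfix]
      exact hinvρ z _
    obtain ⟨Fzi, hFzi, hFzil⟩ := hPL z⁻¹
    obtain ⟨n', hn'⟩ := PLAux.eq_add_int_of_coe_eq ((hFzil x₀).symm.trans hρzifix)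
    set F' : ℝ → ℝ := fun u => Fzi u - n' with hF'def
    have hF'pl : IsPLCircleLift F' := PLAux.pl_sub_int hFzi n'
    have hF'lift : ∀ u : ℝ, ρ z⁻¹ (u : AddCircle (1 : ℝ))
        = ((F' u : ℝ) : AddCircle (1 : ℝ)) := by
      intro u
      rw [hFzil u]
      exact (PLAux.coe_sub_int_eq (Fzi u) n').symm
    have hF'fix : F' x₀ = x₀ := by
      rw [hF'def]
      simp only
      linarith [hn']
    -- F' ∘ F = id
    have hFF' : ∀ u : ℝ, F' (F u) = u := by
      have hcoe : ∀ u : ℝ, ((F' (F u) : ℝ) : AddCircle (1 : ℝ))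
          = ((u : ℝ) : AddCircle (1 : ℝ)) := by
        intro u
        calc ((F' (F u) : ℝ) : AddCircle (1 : ℝ))
            = ρ z⁻¹ ((F u : ℝ) : AddCircle (1 : ℝ)) := (hF'lift (F u)).symm
          _ = ρ z⁻¹ (ρ z (u : AddCircle (1 : ℝ))) := by rw [hFlift u]
          _ = (u : AddCircle (1 : ℝ)) := hinvρ z _
      have hint : ∀ u : ℝ, ∃ m : ℤ, F' (F u) - u = m := by
        intro u
        obtain ⟨m, hm⟩ := PLAux.eq_add_int_of_coe_eq (hcoe u)
        exact ⟨m, by linarith⟩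
      have hd := PLAux.int_valued_const
        (((PLAux.pl_continuous hF'pl).comp (PLAux.pl_continuous hFpl)).sub continuous_id)
        hint
      intro u
      have h1 := hd u x₀
      simp only [Pi.sub_apply, Function.comp_apply, id_eq] at h1
      rw [hFfix, hF'fix] at h1
      linarith
    have hw' : F t < F' (F t) := by
      rw [hFF' t]
      exact hlt
    exact PLAux.key ρ hmul hPL y x z⁻¹ (by rw [hzdef]; group) hzc' F' hF'pl hF'lift
      x₀ hF'fix (F t) hw'
  · -- t < F t : direct case
    exact PLAux.key ρ hmul hPL x y z hzdef hzc F hFpl hFlift x₀ hFfix t hgt
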